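/- Let L_j, L_i : ℝ → ℝ be C² with second derivatives ≥ γ > 0, let c ∈ ℝ, and for fixed y > 0, x > 0 define e(τ) = τ·L_j(−y/τ) + (1−τ)·L_i(x/(1−τ)) for τ ∈ (0,1). Then e is strictly convex on (0,1), with e''(τ) = (y²/τ³)·L_j''(−y/τ) + (x²/(1−τ)³)·L_i''(x/(1−τ)) > 0, and e(τ) → +∞ as τ → 0⁺ and as τ → 1⁻; hence e attains a unique minimum at some τ* ∈ (0,1). -/

import Mathlib

open Set Filter


lemma contDiff_one_deriv {L : ℝ → ℝ} (hL : ContDiff ℝ 2 L) : ContDiff ℝ 1 (deriv L) := by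
  have h : ContDiff ℝ (1+1 : ℕ) L := by exact_mod_cast hL
  rw [show ((1+1:ℕ) : WithTop ℕ∞) = (1:WithTop ℕ∞)+1 by norm_cast] at h
  exact (contDiff_succ_iff_deriv.mp h).2.2

lemma iteratedDeriv_two_eq (L : ℝ → ℝ) : iteratedDeriv 2 L = deriv (deriv L) := by
  rw [show (2:ℕ) = 1 + 1 from rfl, iteratedDeriv_succ, iteratedDeriv_one]

/-- tangent line bound for convex differentiable functions -/
lemma tangent_lb {h : ℝ → ℝ} (hc : ConvexOn ℝ univ h) (hd : Differentiable ℝ h) (ξ : ℝ) :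
    h 0 + deriv h 0 * ξ ≤ h ξ := by
  rcases lt_trichotomy ξ 0 with hlt | heq | hgt
  · have hs := hc.slope_le_of_hasDerivWithinAt (mem_univ ξ) (mem_univ 0) hlt
      ((hd 0).hasDerivAt.hasDerivWithinAt)
    rw [slope_def_field] at hs
    rw [div_le_iff₀ (by linarith)] at hs
    nlinarith
  · simp [heq]
  · have hs := hc.le_slope_of_hasDerivAt (mem_univ 0) (mem_univ ξ) hgt (hd 0).hasDerivAt
    rw [slope_def_field] at hs
    rw [le_div_iff₀ (by linarith)] at hs
    nlinarith

/-- strong convexity lower bound -/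
lemma strong_lb {L : ℝ → ℝ} {γ : ℝ} (hγ : 0 < γ) (hL : ContDiff ℝ 2 L)
    (h'' : ∀ ξ, γ ≤ iteratedDeriv 2 L ξ) (ξ : ℝ) :
    L 0 + deriv L 0 * ξ + γ / 2 * ξ ^ 2 ≤ L ξ := by
  set h : ℝ → ℝ := fun t => L t - γ / 2 * t ^ 2 with hh
  have hdL : Differentiable ℝ L := hL.differentiable two_ne_zero
  have hdL' : Differentiable ℝ (deriv L) := (contDiff_one_deriv hL).differentiable one_ne_zero
  have hder : ∀ t, HasDerivAt h (deriv L t - γ * t) t := by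
    intro t
    have h2 : HasDerivAt (fun t : ℝ => γ / 2 * t ^ 2) (γ * t) t := by
      have := (hasDerivAt_pow 2 t).const_mul (γ / 2)
      exact this.congr_deriv (by ring)
    exact (hdL t).hasDerivAt.sub h2
  have hderiv_h : deriv h = fun t => deriv L t - γ * t := funext fun t => (hder t).deriv
  have hdh : Differentiable ℝ h := fun t => (hder t).differentiableAt
  have hd2 : ∀ t, HasDerivAt (deriv h) (iteratedDeriv 2 L t - γ) t := by
    intro t
    rw [hderiv_h, iteratedDeriv_two_eq]
    exact ((hdL' t).hasDerivAt.sub ((hasDerivAt_id t).const_mul γ)).congr_deriv (by ring)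
  have hdh' : Differentiable ℝ (deriv h) := fun t => (hd2 t).differentiableAt
  have hconv : ConvexOn ℝ univ h := by
    apply convexOn_univ_of_deriv2_nonneg hdh hdh'
    intro t
    have : deriv^[2] h t = deriv (deriv h) t := by
      simp [Function.iterate_succ_apply']
    rw [this, (hd2 t).deriv]
    have := h'' t
    linarith
  have := tangent_lb hconv hdh ξ
  rw [hderiv_h] at this
  simp only [hh] at this
  norm_num at this
  linarith

/-- derivative of t ↦ t * L (a/t) -/
lemma piece_d1 {L : ℝ → ℝ} (hL : Differentiable ℝ L) (a : ℝ) {τ : ℝ} (hτ : τ ≠ 0) :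
    HasDerivAt (fun t => t * L (a / t)) (L (a / τ) - a / τ * deriv L (a / τ)) τ := by
  have hu : HasDerivAt (fun t : ℝ => a / t) (-(a / τ ^ 2)) τ := by
    have := (hasDerivAt_inv hτ).const_mul a
    exact this.congr_deriv (by ring)
  have hcomp := ((hL _).hasDerivAt).comp τ hu
  have := (hasDerivAt_id τ).mul hcomp
  refine this.congr_deriv ?_
  simp only [Function.comp_apply, id_eq]
  field_simp
  ring

/-- second-derivative piece -/
lemma piece_d2 {L : ℝ → ℝ} (hL : ContDiff ℝ 2 L) (a : ℝ) {τ : ℝ} (hτ : τ ≠ 0) :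
    HasDerivAt (fun t => L (a / t) - a / t * deriv L (a / t))
      (a ^ 2 / τ ^ 3 * iteratedDeriv 2 L (a / τ)) τ := by
  have hdL : Differentiable ℝ L := hL.differentiable two_ne_zero
  have hdL' : Differentiable ℝ (deriv L) := (contDiff_one_deriv hL).differentiable one_ne_zero
  have hu : HasDerivAt (fun t : ℝ => a / t) (-(a / τ ^ 2)) τ := by
    have := (hasDerivAt_inv hτ).const_mul a
    exact this.congr_deriv (by ring)
  have h1 := ((hdL _).hasDerivAt).comp τ hu
  have h2 := ((hdL' _).hasDerivAt).comp τ hu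
  have h3 := hu.mul h2
  have h4 := h1.sub h3
  refine h4.congr_deriv ?_
  rw [iteratedDeriv_two_eq]
  simp only [Function.comp_apply]
  field_simp
  ring

theorem e_strictly_convex_unique_min
    (Lj Li : ℝ → ℝ) (γ : ℝ) (hγ : 0 < γ)
    (hLj : ContDiff ℝ 2 Lj) (hLi : ContDiff ℝ 2 Li)
    (hLj'' : ∀ ξ : ℝ, γ ≤ iteratedDeriv 2 Lj ξ)
    (hLi'' : ∀ ξ : ℝ, γ ≤ iteratedDeriv 2 Li ξ)
    (y x : ℝ) (hy : 0 < y) (hx : 0 < x)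
    (e : ℝ → ℝ)
    (he : ∀ τ : ℝ, e τ = τ * Lj (-y / τ) + (1 - τ) * Li (x / (1 - τ))) :
    StrictConvexOn ℝ (Ioo 0 1) e ∧
    (∀ τ ∈ Ioo (0 : ℝ) 1,
      iteratedDeriv 2 e τ =
        y ^ 2 / τ ^ 3 * iteratedDeriv 2 Lj (-y / τ) +
          x ^ 2 / (1 - τ) ^ 3 * iteratedDeriv 2 Li (x / (1 - τ)) ∧
      0 < iteratedDeriv 2 e τ) ∧
    Tendsto e (nhdsWithin 0 (Ioi 0)) atTop ∧
    Tendsto e (nhdsWithin 1 (Iio 1)) atTop ∧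
    (∃! τ : ℝ, τ ∈ Ioo (0 : ℝ) 1 ∧ IsMinOn e (Ioo 0 1) τ) := by
  have heq : e = fun τ => τ * Lj (-y / τ) + (1 - τ) * Li (x / (1 - τ)) := funext he
  have hdLj : Differentiable ℝ Lj := hLj.differentiable two_ne_zero
  have hdLi : Differentiable ℝ Li := hLi.differentiable two_ne_zero
  set e1 : ℝ → ℝ := fun τ =>
    (Lj (-y / τ) - -y / τ * deriv Lj (-y / τ)) -
      (Li (x / (1 - τ)) - x / (1 - τ) * deriv Li (x / (1 - τ))) with he1
  set e2 : ℝ → ℝ := fun τ =>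
    y ^ 2 / τ ^ 3 * iteratedDeriv 2 Lj (-y / τ) +
      x ^ 2 / (1 - τ) ^ 3 * iteratedDeriv 2 Li (x / (1 - τ)) with he2
  have hc : ∀ τ : ℝ, HasDerivAt (fun t : ℝ => 1 - t) (-1) τ := by
    intro τ
    simpa using (hasDerivAt_id τ).const_sub 1
  have hder : ∀ τ ∈ Ioo (0:ℝ) 1, HasDerivAt e (e1 τ) τ := by
    intro τ hτ
    have hτ0 : τ ≠ 0 := ne_of_gt hτ.1
    have hτ1 : (1:ℝ) - τ ≠ 0 := by
      have := hτ.2; intro h; linarith [sub_eq_zero.mp h]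
    rw [heq]
    have h1 := piece_d1 hdLj (-y) hτ0
    have h2 := (piece_d1 hdLi x hτ1).comp τ (hc τ)
    have h3 := h1.add h2
    refine h3.congr_deriv ?_
    simp only [he1]
    ring
  have hder2 : ∀ τ ∈ Ioo (0:ℝ) 1, HasDerivAt e1 (e2 τ) τ := by
    intro τ hτ
    have hτ0 : τ ≠ 0 := ne_of_gt hτ.1
    have hτ1 : (1:ℝ) - τ ≠ 0 := by
      have := hτ.2; intro h; linarith [sub_eq_zero.mp h]
    have h1 := piece_d2 hLj (-y) hτ0
    have h2 := (piece_d2 hLi x hτ1).comp τ (hc τ)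
    have h3 := h1.sub h2
    refine h3.congr_deriv ?_
    simp only [he2]
    ring
  have hd2eq : ∀ τ ∈ Ioo (0:ℝ) 1, iteratedDeriv 2 e τ = e2 τ := by
    intro τ hτ
    have hmem : Ioo (0:ℝ) 1 ∈ nhds τ := isOpen_Ioo.mem_nhds hτ
    have heq' : deriv e =ᶠ[nhds τ] e1 := by
      filter_upwards [hmem] with t ht
      exact (hder t ht).deriv
    rw [iteratedDeriv_two_eq, heq'.deriv_eq]
    exact (hder2 τ hτ).deriv
  have hpos : ∀ τ ∈ Ioo (0:ℝ) 1, 0 < e2 τ := by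
    intro τ hτ
    have h1 : 0 < y ^ 2 / τ ^ 3 := div_pos (pow_pos hy 2) (pow_pos hτ.1 3)
    have h2 : 0 < x ^ 2 / (1 - τ) ^ 3 := by
      have h1τ : (0:ℝ) < 1 - τ := by linarith [hτ.2]
      exact div_pos (pow_pos hx 2) (pow_pos h1τ 3)
    have := hLj'' (-y / τ)
    have := hLi'' (x / (1 - τ))
    have := mul_pos h1 (lt_of_lt_of_le hγ (hLj'' (-y / τ)))
    have := mul_pos h2 (lt_of_lt_of_le hγ (hLi'' (x / (1 - τ))))
    simp only [he2]
    linarith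
  have hcont : ContinuousOn e (Ioo 0 1) := fun τ hτ =>
    ((hder τ hτ).differentiableAt.continuousAt).continuousWithinAt
  have hsc : StrictConvexOn ℝ (Ioo (0:ℝ) 1) e := by
    apply strictConvexOn_of_deriv2_pos (convex_Ioo 0 1) hcont
    intro τ hτ
    rw [isOpen_Ioo.interior_eq] at hτ
    have h2 : iteratedDeriv 2 e = deriv^[2] e := iteratedDeriv_eq_iterate
    rw [← h2, hd2eq τ hτ]
    exact hpos τ hτ
  -- lower bounds via strong convexity
  have hLjlb := strong_lb hγ hLj hLj''
  have hLilb := strong_lb hγ hLi hLi''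
  set Aj := Lj 0 with hAj
  set Bj := deriv Lj 0 with hBj
  set Ai := Li 0 with hAi
  set Bi := deriv Li 0 with hBi
  have key : ∀ τ ∈ Ioo (0:ℝ) 1,
      (-|Aj| - |Ai| - Bj * y + Bi * x) + γ * y ^ 2 / 2 * τ⁻¹ + γ * x ^ 2 / 2 * (1 - τ)⁻¹ ≤ e τ := by
    intro τ hτ
    obtain ⟨hτ0, hτ1⟩ := hτ
    have h1τ : (0:ℝ) < 1 - τ := by linarith
    have hb1 := hLjlb (-y / τ)
    have hb2 := hLilb (x / (1 - τ))
    have e1' : τ * Lj (-y / τ) ≥ τ * (Aj + Bj * (-y / τ) + γ / 2 * (-y / τ) ^ 2) := by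
      apply mul_le_mul_of_nonneg_left _ (le_of_lt hτ0)
      linarith
    have e2' : (1 - τ) * Li (x / (1 - τ)) ≥
        (1 - τ) * (Ai + Bi * (x / (1 - τ)) + γ / 2 * (x / (1 - τ)) ^ 2) := by
      apply mul_le_mul_of_nonneg_left _ (le_of_lt h1τ)
      linarith
    have id1 : τ * (Aj + Bj * (-y / τ) + γ / 2 * (-y / τ) ^ 2) =
        τ * Aj - Bj * y + γ * y ^ 2 / 2 * τ⁻¹ := by
      field_simp
      ring
    have id2 : (1 - τ) * (Ai + Bi * (x / (1 - τ)) + γ / 2 * (x / (1 - τ)) ^ 2) =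
        (1 - τ) * Ai + Bi * x + γ * x ^ 2 / 2 * (1 - τ)⁻¹ := by
      field_simp
    have hAj' : -|Aj| ≤ τ * Aj := by
      have habs : |τ * Aj| ≤ |Aj| := by
        rw [abs_mul, abs_of_pos hτ0]
        calc τ * |Aj| ≤ 1 * |Aj| := mul_le_mul_of_nonneg_right (by linarith) (abs_nonneg Aj)
        _ = |Aj| := one_mul _
      linarith [neg_abs_le (τ * Aj)]
    have hAi' : -|Ai| ≤ (1 - τ) * Ai := by
      have habs : |(1 - τ) * Ai| ≤ |Ai| := by
        rw [abs_mul, abs_of_pos h1τ]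
        calc (1 - τ) * |Ai| ≤ 1 * |Ai| := mul_le_mul_of_nonneg_right (by linarith) (abs_nonneg Ai)
        _ = |Ai| := one_mul _
      linarith [neg_abs_le ((1 - τ) * Ai)]
    rw [he τ]
    rw [id1] at e1'
    rw [id2] at e2'
    linarith
  have hmain : (0:ℝ) < γ * y ^ 2 / 2 := by positivity
  have hmain2 : (0:ℝ) < γ * x ^ 2 / 2 := by positivity
  have htend0 : Tendsto e (nhdsWithin 0 (Ioi 0)) atTop := by
    have hb : Tendsto (fun τ : ℝ =>
        (-|Aj| - |Ai| - Bj * y + Bi * x) + γ * y ^ 2 / 2 * τ⁻¹) (nhdsWithin 0 (Ioi 0)) atTop := by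
      apply tendsto_atTop_add_const_left
      exact Tendsto.const_mul_atTop hmain tendsto_inv_nhdsGT_zero
    apply tendsto_atTop_mono' _ _ hb
    filter_upwards [Ioo_mem_nhdsGT (zero_lt_one)] with τ hτ
    have := key τ hτ
    have h1τ : (0:ℝ) < 1 - τ := by linarith [hτ.2]
    have : 0 ≤ γ * x ^ 2 / 2 * (1 - τ)⁻¹ := by positivity
    linarith [key τ hτ]
  have htend1 : Tendsto e (nhdsWithin 1 (Iio 1)) atTop := by
    have hsub : Tendsto (fun τ : ℝ => 1 - τ) (nhdsWithin 1 (Iio 1)) (nhdsWithin 0 (Ioi 0)) := by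
      apply tendsto_nhdsWithin_of_tendsto_nhds_of_eventually_within
      · have hcts : Continuous (fun τ : ℝ => 1 - τ) := continuous_const.sub continuous_id
        have h0 : Tendsto (fun τ : ℝ => 1 - τ) (nhds 1) (nhds 0) := by
          simpa using hcts.tendsto 1
        exact h0.mono_left nhdsWithin_le_nhds
      · filter_upwards [self_mem_nhdsWithin] with τ hτ
        simp only [mem_Iio] at hτ
        simp only [mem_Ioi]
        linarith
    have hb : Tendsto (fun τ : ℝ =>
        (-|Aj| - |Ai| - Bj * y + Bi * x) + γ * x ^ 2 / 2 * (1 - τ)⁻¹)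
        (nhdsWithin 1 (Iio 1)) atTop := by
      apply tendsto_atTop_add_const_left
      exact Tendsto.const_mul_atTop hmain2 (tendsto_inv_nhdsGT_zero.comp hsub)
    apply tendsto_atTop_mono' _ _ hb
    filter_upwards [Ioo_mem_nhdsLT (zero_lt_one)] with τ hτ
    have hτ0 : (0:ℝ) < τ := hτ.1
    have : 0 ≤ γ * y ^ 2 / 2 * τ⁻¹ := by positivity
    linarith [key τ hτ]
  refine ⟨hsc, fun τ hτ => ⟨hd2eq τ hτ, (hd2eq τ hτ) ▸ hpos τ hτ⟩, htend0, htend1, ?_⟩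
  -- existence and uniqueness of minimum
  set M := e (1/2) with hM
  obtain ⟨a, ha1, ha2⟩ := mem_nhdsGT_iff_exists_Ioo_subset.mp
    (htend0.eventually_gt_atTop M)
  obtain ⟨b, hb1, hb2⟩ := mem_nhdsLT_iff_exists_Ioo_subset.mp
    (htend1.eventually_gt_atTop M)
  simp only [mem_Ioi] at ha1
  simp only [mem_Iio] at hb1
  set lo : ℝ := min (a/2) (1/4) with hlo
  set hi : ℝ := max ((b+1)/2) (3/4) with hhi
  have hlo0 : 0 < lo := lt_min (by linarith) (by norm_num)
  have hlo4 : lo ≤ 1/4 := min_le_right _ _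
  have hhi34 : 3/4 ≤ hi := le_max_right _ _
  have hhi1 : hi < 1 := by
    apply max_lt (by linarith) (by norm_num)
  have hsubset : Icc lo hi ⊆ Ioo (0:ℝ) 1 := fun t ht =>
    ⟨lt_of_lt_of_le hlo0 ht.1, lt_of_le_of_lt ht.2 hhi1⟩
  have hhalf : (1/2 : ℝ) ∈ Icc lo hi := ⟨by linarith, by linarith⟩
  obtain ⟨τs, hτs, hmin⟩ := (isCompact_Icc (a := lo) (b := hi)).exists_isMinOn
    ⟨1/2, hhalf⟩ (hcont.mono hsubset)
  have hτsmem : τs ∈ Ioo (0:ℝ) 1 := hsubset hτs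
  have hminon : IsMinOn e (Ioo 0 1) τs := by
    intro t ht
    rcases le_or_gt t hi with h1 | h1
    · rcases le_or_gt lo t with h2 | h2
      · exact hmin ⟨h2, h1⟩
      · -- t < lo ≤ a/2 < a, so t ∈ Ioo 0 a
        have hta : t ∈ Ioo 0 a := ⟨ht.1, by
          have : lo ≤ a/2 := min_le_left _ _
          linarith⟩
        have h3 : M < e t := ha2 hta
        have h4 : e τs ≤ M := hmin hhalf
        simp only [mem_setOf_eq]
        linarith
    · -- hi < t, t > (b+1)/2 > b
      have htb : t ∈ Ioo b 1 := ⟨by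
        have : (b+1)/2 ≤ hi := le_max_left _ _
        linarith, ht.2⟩
      have h3 : M < e t := hb2 htb
      have h4 : e τs ≤ M := hmin hhalf
      simp only [mem_setOf_eq]
      linarith
  refine ⟨τs, ⟨hτsmem, hminon⟩, ?_⟩
  rintro τ' ⟨hτ'mem, hτ'min⟩
  exact hsc.eq_of_isMinOn hτ'min hminon hτ'mem hτsmem
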